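/- arXiv:2603.15588 — 2 statements merged into one kernel-verified Lean document; each statement's English description precedes it below -/
import Mathlib

section
/- Let X be symmetric positive definite and K diagonal with 0 ≺ K ≺ 2X⁻¹. Then the spectral radius of A = I − XK is strictly less than 1. -/
open Matrix Complex
open scoped ComplexOrder

lemma dot_ofReal {m : Type*} [Fintype m] (M : Matrix m m ℝ) (y z : m → ℝ) :
    (fun i => (y i : ℂ)) ⬝ᵥ (M.map Complex.ofReal) *ᵥ (fun i => (z i : ℂ))
      = ((y ⬝ᵥ M *ᵥ z : ℝ) : ℂ) := by
  simp only [dotProduct, mulVec, Matrix.map_apply]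
  push_cast
  ring

lemma posDef_map_ofReal {m : Type*} [Fintype m] {M : Matrix m m ℝ} (hM : M.PosDef) :
    (M.map Complex.ofReal).PosDef := by
  refine Matrix.PosDef.of_dotProduct_mulVec_pos ?_ ?_
  · exact hM.1.map _ (fun r => (Complex.conj_ofReal r).symm)
  · intro x hx
    set a : m → ℝ := fun i => (x i).re with ha
    set b : m → ℝ := fun i => (x i).im with hb
    have hxeq : x = (fun i => ((a i : ℂ))) + Complex.I • (fun i => ((b i : ℂ))) := by
      funext i
      simp [ha, hb, Complex.ext_iff]
    have hstar : star x = (fun i => ((a i : ℂ))) - Complex.I • (fun i => ((b i : ℂ))) := by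
      funext i
      simp [ha, hb, Complex.ext_iff]
    have hsym : ∀ y z : m → ℝ, y ⬝ᵥ M *ᵥ z = z ⬝ᵥ M *ᵥ y := by
      intro y z
      have hMs : Mᵀ = M := hM.1
      rw [Matrix.dotProduct_mulVec, ← Matrix.vecMul_transpose, hMs, dotProduct_comm]
    have hd : star x ⬝ᵥ (M.map Complex.ofReal) *ᵥ x
        = ((a ⬝ᵥ M *ᵥ a + b ⬝ᵥ M *ᵥ b : ℝ) : ℂ) := by
      rw [hstar]
      conv_lhs => rw [hxeq]
      rw [Matrix.mulVec_add, Matrix.mulVec_smul, dotProduct_add, sub_dotProduct,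
        sub_dotProduct, smul_dotProduct, smul_dotProduct,
        dotProduct_smul, dotProduct_smul, dot_ofReal, dot_ofReal, dot_ofReal,
        dot_ofReal, hsym b a]
      simp only [smul_eq_mul]
      push_cast
      ring_nf
      rw [Complex.I_sq]
      ring
    rw [hd]
    have hab : a ≠ 0 ∨ b ≠ 0 := by
      by_contra h
      push_neg at h
      apply hx
      funext i
      have h1 := congrFun h.1 i
      have h2 := congrFun h.2 i
      simp [ha, hb] at h1 h2
      exact Complex.ext h1 h2
    have hpos : 0 < a ⬝ᵥ M *ᵥ a + b ⬝ᵥ M *ᵥ b := by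
      rcases hab with h | h
      · have := hM.dotProduct_mulVec_pos h
        have h2 : 0 ≤ b ⬝ᵥ M *ᵥ b := by
          have := hM.posSemidef.dotProduct_mulVec_nonneg b
          simpa using this
        simpa using add_pos_of_pos_of_nonneg (by simpa using this) h2
      · have := hM.dotProduct_mulVec_pos h
        have h2 : 0 ≤ a ⬝ᵥ M *ᵥ a := by
          have := hM.posSemidef.dotProduct_mulVec_nonneg a
          simpa using this
        simpa using add_pos_of_nonneg_of_pos h2 (by simpa using this)
    exact_mod_cast hpos


theorem stmt_3 {n : ℕ} (X K : Matrix (Fin n) (Fin n) ℝ)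
    (hX : X.PosDef)
    (hKdiag : K.IsDiag) (hK : K.PosDef) (hK2 : ((2 : ℝ) • X⁻¹ - K).PosDef) :
    ∀ μ ∈ spectrum ℂ ((1 - X * K).map (Complex.ofReal)), ‖μ‖ < 1 := by
  intro μ hμ
  set Xc := X.map Complex.ofReal with hXcdef
  set Kc := K.map Complex.ofReal with hKcdef
  have hXcPD : Xc.PosDef := posDef_map_ofReal hX
  have hKcPD : Kc.PosDef := posDef_map_ofReal hK
  have hWPD : (((2:ℝ) • X⁻¹ - K).map Complex.ofReal).PosDef := posDef_map_ofReal hK2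
  have hmulmap : ∀ A B : Matrix (Fin n) (Fin n) ℝ,
      (A * B).map Complex.ofReal = A.map Complex.ofReal * B.map Complex.ofReal := by
    intro A B
    ext i j
    simp [Matrix.mul_apply]
  have hmap : (1 - X * K).map Complex.ofReal = 1 - Xc * Kc := by
    rw [Matrix.map_sub Complex.ofReal (by push_cast; simp),
      Matrix.map_one Complex.ofReal (by simp) (by simp), hmulmap]
  -- get an eigenvector
  rw [spectrum.mem_iff] at hμ
  have hdet : (μ • (1 : Matrix (Fin n) (Fin n) ℂ) - (1 - X * K).map Complex.ofReal).det = 0 := by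
    by_contra h
    exact hμ (by
      rw [Algebra.algebraMap_eq_smul_one]
      exact (Matrix.isUnit_iff_isUnit_det _).2 (isUnit_iff_ne_zero.2 h))
  obtain ⟨v, hv0, hv⟩ := Matrix.exists_mulVec_eq_zero_iff.mpr hdet
  rw [hmap, Matrix.sub_mulVec, Matrix.smul_mulVec, Matrix.one_mulVec,
    Matrix.sub_mulVec, Matrix.one_mulVec, sub_eq_zero] at hv
  -- hv : μ • v = v - (Xc * Kc) *ᵥ v
  set l : ℂ := 1 - μ with hldef
  set u : Fin n → ℂ := Kc *ᵥ v with hudef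
  have hlu : Xc *ᵥ u = l • v := by
    rw [hudef, Matrix.mulVec_mulVec, hldef, sub_smul, one_smul, hv, sub_sub_cancel]
  have hu0 : u ≠ 0 := by
    intro h
    have h1 := hKcPD.dotProduct_mulVec_pos hv0
    rw [← hudef, h] at h1
    simp at h1
  set k : ℂ := star v ⬝ᵥ u with hkdef
  have hk : 0 < k := hKcPD.dotProduct_mulVec_pos hv0
  have hc : 0 < star u ⬝ᵥ Xc *ᵥ u := hXcPD.dotProduct_mulVec_pos hu0
  have hkre : 0 < k.re ∧ k.im = 0 := by
    rw [Complex.lt_def] at hk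
    exact ⟨by simpa using hk.1, by simpa using hk.2.symm⟩
  have hkval : k = (k.re : ℂ) := Complex.ext (by simp) (by simp [hkre.2])
  have hconj : star u ⬝ᵥ v = (starRingEnd ℂ) k := by
    rw [hkdef]
    simp [dotProduct, map_sum, mul_comm]
  have hck : star u ⬝ᵥ Xc *ᵥ u = l * k := by
    rw [hlu, dotProduct_smul, smul_eq_mul, hconj, hkval]
    simp
  rw [hck, Complex.lt_def] at hc
  -- hc : 0 < (l*k).re ∧ 0 = (l*k).im
  have hlre : 0 < l.re ∧ l.im = 0 := by
    have h1 : (l * k).re = l.re * k.re := by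
      rw [Complex.mul_re, hkre.2]; ring
    have h2 : (l * k).im = l.im * k.re := by
      rw [Complex.mul_im, hkre.2]; ring
    have hc1 : 0 < l.re * k.re := by
      have h0 := hc.1
      simp only [Complex.zero_re] at h0
      rwa [h1] at h0
    have hc2 : l.im * k.re = 0 := by
      have h0 := hc.2
      simp only [Complex.zero_im] at h0
      rw [h2] at h0
      exact h0.symm
    constructor
    · nlinarith [hc1, hkre.1]
    · rcases mul_eq_zero.mp hc2 with h | h
      · exact h
      · exact absurd h (ne_of_gt hkre.1)
  set lr := l.re with hlrdef
  have hlval : l = (lr : ℂ) := Complex.ext (by simp [hlrdef]) (by simp [hlre.2])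
  have hl0 : l ≠ 0 := by
    rw [hlval]
    exact_mod_cast ne_of_gt hlre.1
  have hXdet : IsUnit X.det := isUnit_iff_ne_zero.2 (ne_of_gt hX.det_pos)
  have hXinvmap : (X⁻¹).map Complex.ofReal = Xc⁻¹ := by
    apply (Matrix.inv_eq_left_inv ?_).symm
    rw [hXcdef, ← hmulmap, Matrix.nonsing_inv_mul X hXdet]
    exact Matrix.map_one _ (by simp) (by simp)
  have hXcdet : IsUnit Xc.det := isUnit_iff_ne_zero.2 hXcPD.det_pos.ne'
  have huXcinv : Xc⁻¹ *ᵥ v = l⁻¹ • u := by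
    have h1 : Xc⁻¹ *ᵥ (Xc *ᵥ u) = u := by
      rw [Matrix.mulVec_mulVec, Matrix.nonsing_inv_mul Xc hXcdet, Matrix.one_mulVec]
    rw [hlu, Matrix.mulVec_smul] at h1
    rw [← h1, smul_smul, inv_mul_cancel₀ hl0, one_smul]
  have hWmap : ((2:ℝ) • X⁻¹ - K).map Complex.ofReal = (2:ℂ) • Xc⁻¹ - Kc := by
    rw [← hXinvmap, hKcdef]
    ext i j
    simp [Matrix.sub_apply, Matrix.smul_apply, Matrix.map_apply]
  have hW := hWPD.dotProduct_mulVec_pos hv0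
  rw [hWmap] at hW
  have hWval : star v ⬝ᵥ ((2:ℂ) • Xc⁻¹ - Kc) *ᵥ v = 2 * l⁻¹ * k - k := by
    rw [Matrix.sub_mulVec, Matrix.smul_mulVec, huXcinv, dotProduct_sub,
      dotProduct_smul, dotProduct_smul, ← hudef, ← hkdef]
    simp only [smul_eq_mul]
    ring
  rw [hWval] at hW
  have hval : 2 * l⁻¹ * k - k = ((2 * lr⁻¹ * k.re - k.re : ℝ) : ℂ) := by
    rw [hlval, hkval]
    push_cast
    simp only [Complex.ofReal_re]
  rw [hval, Complex.lt_def] at hW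
  have hWre : 0 < 2 * lr⁻¹ * k.re - k.re := by simpa using hW.1
  have hlr2 : lr < 2 := by
    have hkpos := hkre.1
    have hlrpos := hlre.1
    have h4 : lr * (2 * lr⁻¹ * k.re - k.re) > 0 := mul_pos hlrpos hWre
    have h5 : lr * (2 * lr⁻¹ * k.re) = 2 * k.re := by
      field_simp
    nlinarith
  have hμval : μ = ((1 - lr : ℝ) : ℂ) := by
    have h6 : μ = 1 - l := by rw [hldef]; ring
    rw [h6, hlval]
    push_cast
    ring
  rw [hμval, Complex.norm_real, Real.norm_eq_abs, abs_lt]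
  constructor
  · linarith [hlr2]
  · linarith [hlre.1]
end

section
/- Under the droop update q(t+1) = q(t) − K(v(t) − v_ref(t)) with v(t) = R p(t) + X q(t) + 1, if the power injection is constant p(t) ≡ p̄ and the reference is constant v_ref(t) ≡ v̄_ref, and K is diagonal positive with K ≺ 2X⁻¹ and X symmetric positive definite, then v(t) → v̄_ref as t → ∞. -/
open Matrix Filter

/-- Conjugation of a positive definite matrix by an invertible hermitian matrix. -/
lemma conj_posDef_aux {n : ℕ} {M S : Matrix (Fin n) (Fin n) ℝ} (hM : M.PosDef)
    (hS : S.IsHermitian) (hSu : IsUnit S) : (S * M * S).PosDef := by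
  refine Matrix.PosDef.of_dotProduct_mulVec_pos ?_ ?_
  · have := Matrix.isHermitian_conjTranspose_mul_mul S hM.1
    rwa [hS.eq] at this
  · intro x hx
    have hinj : Function.Injective (S.mulVec) :=
      Matrix.mulVec_injective_iff_isUnit.mpr hSu
    have hx' : S *ᵥ x ≠ 0 := by
      intro h
      exact hx (hinj (by simpa using h))
    have key := hM.dotProduct_mulVec_pos hx'
    have : S * M * S = Sᴴ * M * S := by rw [hS.eq]
    rw [this]
    simpa only [star_mulVec, dotProduct_mulVec, vecMul_vecMul] using key

/-- Powers of a symmetric matrix with spectrum in (-1,1) applied to a vector tend to 0. -/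
lemma tendsto_pow_mulVec_aux {n : ℕ} {B : Matrix (Fin n) (Fin n) ℝ} (hB : B.IsHermitian)
    (h1 : ((1 : Matrix (Fin n) (Fin n) ℝ) - B).PosDef)
    (h2 : ((1 : Matrix (Fin n) (Fin n) ℝ) + B).PosDef) (w : Fin n → ℝ) :
    Tendsto (fun t => (B ^ t) *ᵥ w) atTop (nhds 0) := by
  classical
  set u : Fin n → (Fin n → ℝ) := fun j => ⇑(hB.eigenvectorBasis j) with hu
  set μ : Fin n → ℝ := hB.eigenvalues with hμ
  have hBu : ∀ j, B *ᵥ u j = μ j • u j := fun j => hB.mulVec_eigenvectorBasis j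
  have hne : ∀ j, u j ≠ 0 := fun j => by
    have := hB.eigenvectorBasis.orthonormal.ne_zero j
    intro h
    apply this
    ext i
    exact congrFun h i
  have huu : ∀ j, u j ⬝ᵥ u j = 1 := by
    intro j
    have h1' : ‖hB.eigenvectorBasis j‖ = 1 := hB.eigenvectorBasis.orthonormal.1 j
    have : (inner ℝ (hB.eigenvectorBasis j) (hB.eigenvectorBasis j) : ℝ) = 1 := by
      rw [real_inner_self_eq_norm_sq, h1']; norm_num
    rw [← this]
    simp only [EuclideanSpace.inner_eq_star_dotProduct, dotProduct, star_trivial, hu]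
  have hlt : ∀ j, |μ j| < 1 := by
    intro j
    have p1 := h1.dotProduct_mulVec_pos (hne j)
    have p2 := h2.dotProduct_mulVec_pos (hne j)
    rw [Matrix.sub_mulVec, Matrix.one_mulVec, hBu, star_trivial, dotProduct_sub,
      dotProduct_smul, huu, smul_eq_mul, mul_one] at p1
    rw [Matrix.add_mulVec, Matrix.one_mulVec, hBu, star_trivial, dotProduct_add,
      dotProduct_smul, huu, smul_eq_mul, mul_one] at p2
    rw [abs_lt]
    constructor <;> linarith
  have hpow : ∀ (t : ℕ) (j : Fin n), (B ^ t) *ᵥ u j = (μ j ^ t) • u j := by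
    intro t j
    induction t with
    | zero => simp
    | succ t ih =>
      rw [pow_succ', ← Matrix.mulVec_mulVec, ih, Matrix.mulVec_smul, hBu, smul_smul,
        ← pow_succ]
  have hw : w = ∑ j, (hB.eigenvectorBasis.repr ((WithLp.equiv 2 _).symm w) j) • u j :=
    by
      have := congrArg WithLp.ofLp
        (hB.eigenvectorBasis.sum_repr ((WithLp.equiv 2 (Fin n → ℝ)).symm w)).symm
      simpa [u] using this
  have hsum : ∀ t, (B ^ t) *ᵥ w
      = ∑ j, (hB.eigenvectorBasis.repr ((WithLp.equiv 2 _).symm w) j * μ j ^ t) • u j := by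
    intro t
    conv_lhs => rw [hw]
    rw [show ∀ (M : Matrix (Fin n) (Fin n) ℝ) (f : Fin n → (Fin n → ℝ)),
        M *ᵥ (∑ j, f j) = ∑ j, M *ᵥ f j from fun M f => by
      have := map_sum M.mulVecLin f Finset.univ
      simpa only [Matrix.mulVecLin_apply] using this]
    refine Finset.sum_congr rfl fun j _ => ?_
    rw [Matrix.mulVec_smul, hpow, smul_smul]
  simp only [hsum]
  have : Tendsto (fun t => ∑ j : Fin n,
      (hB.eigenvectorBasis.repr ((WithLp.equiv 2 _).symm w) j * μ j ^ t) • u j)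
      atTop (nhds (∑ j : Fin n, (0 : Fin n → ℝ))) := by
    refine tendsto_finset_sum _ fun j _ => ?_
    have hμt : Tendsto (fun t => hB.eigenvectorBasis.repr ((WithLp.equiv 2 _).symm w) j * μ j ^ t)
        atTop (nhds 0) := by
      have := tendsto_pow_atTop_nhds_zero_of_abs_lt_one (hlt j)
      simpa using this.const_mul (hB.eigenvectorBasis.repr ((WithLp.equiv 2 _).symm w) j)
    simpa using hμt.smul_const (u j)
  simpa using this

open scoped MatrixOrder in
lemma exists_sqrt_aux {n : ℕ} {X : Matrix (Fin n) (Fin n) ℝ} (hX : X.PosSemidef) :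
    ∃ S : Matrix (Fin n) (Fin n) ℝ, S.IsHermitian ∧ S * S = X :=
  ⟨CFC.sqrt X, (Matrix.nonneg_iff_posSemidef.mp (CFC.sqrt_nonneg X)).isHermitian,
    CFC.sqrt_mul_sqrt_self X (Matrix.nonneg_iff_posSemidef.mpr hX)⟩

theorem stmt_18 {n : ℕ} (R X K : Matrix (Fin n) (Fin n) ℝ)
    (hX : X.PosDef)
    (hKdiag : K.IsDiag) (hK : K.PosDef) (hK2 : ((2 : ℝ) • X⁻¹ - K).PosDef)
    (pbar vrefbar : Fin n → ℝ)
    (v q : ℕ → Fin n → ℝ)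
    (hv : ∀ t, v t = R.mulVec pbar + X.mulVec (q t) + 1)
    (hq : ∀ t, q (t + 1) = q t - K.mulVec (v t - vrefbar)) :
    Filter.Tendsto v Filter.atTop (nhds vrefbar) := by
  classical
  obtain ⟨S, hSherm, hSS⟩ := exists_sqrt_aux hX.posSemidef
  have hSu : IsUnit S := by
    rw [Matrix.isUnit_iff_isUnit_det]
    have hdet : S.det * S.det = X.det := by rw [← Matrix.det_mul, hSS]
    have : S.det ≠ 0 := by
      intro h
      rw [h, mul_zero] at hdet
      exact hX.det_pos.ne' hdet.symm
    exact this.isUnit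
  have hSdetu : IsUnit S.det := Matrix.isUnit_iff_isUnit_det _ |>.1 hSu
  have hSinv : S * S⁻¹ = 1 := Matrix.mul_nonsing_inv S hSdetu
  have hSinv' : S⁻¹ * S = 1 := Matrix.nonsing_inv_mul S hSdetu
  have hXinv : S * X⁻¹ * S = 1 := by
    rw [← hSS, Matrix.mul_inv_rev, ← Matrix.mul_assoc, hSinv, Matrix.one_mul, hSinv']
  set B : Matrix (Fin n) (Fin n) ℝ := 1 - S * K * S with hBdef
  have hBherm : B.IsHermitian := by
    have := Matrix.isHermitian_conjTranspose_mul_mul S hK.1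
    rw [hSherm.eq] at this
    exact Matrix.isHermitian_one.sub this
  have h1B : ((1 : Matrix (Fin n) (Fin n) ℝ) - B).PosDef := by
    rw [hBdef, sub_sub_cancel]
    exact conj_posDef_aux hK hSherm hSu
  have h2B : ((1 : Matrix (Fin n) (Fin n) ℝ) + B).PosDef := by
    have key : (1 : Matrix (Fin n) (Fin n) ℝ) + B = S * ((2 : ℝ) • X⁻¹ - K) * S := by
      rw [hBdef, Matrix.mul_sub, Matrix.sub_mul, mul_smul_comm, smul_mul_assoc, hXinv,
        two_smul]
      abel
    rw [key]
    exact conj_posDef_aux hK2 hSherm hSu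
  -- recurrence for the error
  have he : ∀ t, v (t + 1) - vrefbar = (1 - X * K) *ᵥ (v t - vrefbar) := by
    intro t
    rw [hv (t + 1), hq t, hv t]
    rw [Matrix.mulVec_sub, Matrix.sub_mulVec, Matrix.one_mulVec, ← Matrix.mulVec_mulVec]
    abel
  have hiter : ∀ t, v t - vrefbar = ((1 - X * K) ^ t) *ᵥ (v 0 - vrefbar) := by
    intro t
    induction t with
    | zero => simp
    | succ t ih => rw [he t, ih, Matrix.mulVec_mulVec, ← pow_succ']
  have hmul : (1 - X * K) * S = S * B := by
    rw [hBdef, ← hSS]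
    noncomm_ring
  have hsim : 1 - X * K = S * B * S⁻¹ := by
    rw [← hmul, Matrix.mul_assoc, hSinv, Matrix.mul_one]
  have hpowsim : ∀ t, (1 - X * K) ^ t = S * B ^ t * S⁻¹ := by
    intro t
    induction t with
    | zero => simp [hSinv]
    | succ t ih =>
      rw [pow_succ, ih, hsim, pow_succ, Matrix.mul_assoc (S * B ^ t) S⁻¹]
      rw [show S⁻¹ * (S * B * S⁻¹) = B * S⁻¹ from by
        rw [← Matrix.mul_assoc, ← Matrix.mul_assoc, hSinv', Matrix.one_mul]]
      noncomm_ring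
  have he2 : ∀ t, v t - vrefbar = S *ᵥ ((B ^ t) *ᵥ (S⁻¹ *ᵥ (v 0 - vrefbar))) := by
    intro t
    rw [hiter t, hpowsim t, Matrix.mulVec_mulVec, Matrix.mulVec_mulVec]
  have hBt := tendsto_pow_mulVec_aux hBherm h1B h2B (S⁻¹ *ᵥ (v 0 - vrefbar))
  have hcont : Continuous (fun y : Fin n → ℝ => S *ᵥ y) :=
    LinearMap.continuous_of_finiteDimensional S.mulVecLin
  have htend : Tendsto (fun t => v t - vrefbar) atTop (nhds 0) := by
    have h0 : Tendsto (fun t => S *ᵥ ((B ^ t) *ᵥ (S⁻¹ *ᵥ (v 0 - vrefbar)))) atTop (nhds 0) := by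
      have := (hcont.tendsto 0).comp hBt
      simpa [Function.comp_def] using this
    exact h0.congr fun t => (he2 t).symm
  have := htend.add_const vrefbar
  simpa using this
end
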